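/- Let M be an (m+k)×(m+k) Hermitian positive-definite complex matrix written in block form M = [[A, B],[B*, S]], where A is m×m and S is k×k. Then both S and M are invertible and, for every 1 ≤ i ≤ k, the diagonal entries of the inverses satisfy (S⁻¹)_{ii} ≤ (M⁻¹)_{m+i, m+i} (both being positive real numbers). -/

import Mathlib

open Matrix
open scoped ComplexOrder

private lemma psd_diag {n : Type*} [Fintype n] [DecidableEq n] {P : Matrix n n ℂ} (hP : P.PosSemidef) (i : n) :
    0 ≤ P i i := by
  have h := hP.dotProduct_mulVec_nonneg (Pi.single i 1)
  simpa [dotProduct, Pi.single_apply, Finset.sum_ite_eq, mulVec] using h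

private lemma pd_diag {n : Type*} [Fintype n] [DecidableEq n] {P : Matrix n n ℂ} (hP : P.PosDef) (i : n) :
    0 < P i i := by
  have h := hP.dotProduct_mulVec_pos (x := Pi.single i 1) (by
    intro h
    have := congrFun h i
    simp [Pi.single_apply] at this)
  simpa [dotProduct, Pi.single_apply, Finset.sum_ite_eq, mulVec] using h

/-- **Lemma.** If `M = [[A, B], [B*, S]]` is Hermitian positive definite, then
`S` and `M` are invertible and the diagonal entries of the inverses (which are
positive reals) satisfy `(S⁻¹)_{ii} ≤ (M⁻¹)_{m+i, m+i}` for every `i`. -/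
theorem stmt10 {m k : ℕ}
    (A : Matrix (Fin m) (Fin m) ℂ) (B : Matrix (Fin m) (Fin k) ℂ)
    (S : Matrix (Fin k) (Fin k) ℂ)
    (M : Matrix (Fin m ⊕ Fin k) (Fin m ⊕ Fin k) ℂ)
    (hM : M = Matrix.fromBlocks A B Bᴴ S)
    (hpd : M.PosDef) :
    IsUnit S.det ∧ IsUnit M.det ∧
      ∀ i : Fin k,
        ((S⁻¹ i i).im = 0 ∧ 0 < (S⁻¹ i i).re) ∧
        ((M⁻¹ (Sum.inr i) (Sum.inr i)).im = 0 ∧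
          0 < (M⁻¹ (Sum.inr i) (Sum.inr i)).re) ∧
        (S⁻¹ i i).re ≤ (M⁻¹ (Sum.inr i) (Sum.inr i)).re := by
  subst hM
  set N := Matrix.fromBlocks A B Bᴴ S with hN
  obtain ⟨hAh, -, -, hSh⟩ := isHermitian_fromBlocks_iff.mp hpd.1
  -- A is positive definite
  have hA : A.PosDef := by
    refine .of_dotProduct_mulVec_pos hAh fun x hx => ?_
    have h := hpd.dotProduct_mulVec_pos (x := Sum.elim x 0) (by
      intro h
      exact hx (funext fun i => congrFun h (Sum.inl i)))
    simpa [hN, fromBlocks_mulVec, dotProduct] using h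
  -- S is positive definite
  have hS : S.PosDef := by
    refine .of_dotProduct_mulVec_pos hSh fun x hx => ?_
    have h := hpd.dotProduct_mulVec_pos (x := Sum.elim 0 x) (by
      intro h
      exact hx (funext fun i => congrFun h (Sum.inr i)))
    simpa [hN, fromBlocks_mulVec, dotProduct] using h
  letI := hA.isUnit.invertible
  letI := hS.isUnit.invertible
  -- the Schur complement L = S - Bᴴ A⁻¹ B is positive definite
  have hL : (S - Bᴴ * A⁻¹ * B).PosDef := by
    refine .of_dotProduct_mulVec_pos ((Matrix.IsHermitian.fromBlocks₁₁ B S hAh).mp hpd.1) fun x hx => ?_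
    have h := Matrix.schur_complement_eq₁₁ (α := ℂ) B S (-((A⁻¹ * B) *ᵥ x)) x hAh
    have h2 := hpd.dotProduct_mulVec_pos (x := Sum.elim (-((A⁻¹ * B) *ᵥ x)) x) (by
      intro hz
      exact hx (funext fun i => congrFun hz (Sum.inr i)))
    rw [show (star (Sum.elim (-((A⁻¹ * B) *ᵥ x)) x)) ⬝ᵥ (N *ᵥ (Sum.elim (-((A⁻¹ * B) *ᵥ x)) x))
        = (star (Sum.elim (-((A⁻¹ * B) *ᵥ x)) x)) ᵥ* N ⬝ᵥ (Sum.elim (-((A⁻¹ * B) *ᵥ x)) x)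
        from dotProduct_mulVec _ _ _, hN, h, neg_add_cancel] at h2
    simpa [dotProduct_mulVec] using h2
  letI := hL.isUnit.invertible
  letI : Invertible N := hpd.isUnit.invertible
  -- the lower-right block of N⁻¹ is the inverse of the Schur complement
  have hinv : N⁻¹ = fromBlocks
      (A⁻¹ + A⁻¹ * B * (S - Bᴴ * A⁻¹ * B)⁻¹ * Bᴴ * A⁻¹)
      (-(A⁻¹ * B * (S - Bᴴ * A⁻¹ * B)⁻¹))
      (-((S - Bᴴ * A⁻¹ * B)⁻¹ * Bᴴ * A⁻¹)) ((S - Bᴴ * A⁻¹ * B)⁻¹) := by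
    letI : Invertible (S - Bᴴ * ⅟A * B) := by
      rw [invOf_eq_nonsing_inv]; exact hL.isUnit.invertible
    have h := Matrix.invOf_fromBlocks₁₁_eq A B Bᴴ S
    simp only [invOf_eq_nonsing_inv] at h
    exact h
  have hMdiag : ∀ i, N⁻¹ (Sum.inr i) (Sum.inr i) = (S - Bᴴ * A⁻¹ * B)⁻¹ i i := by
    intro i; rw [hinv]; rfl
  -- the difference of inverses is positive semidefinite
  letI := (hL.inv).isUnit.invertible
  have hBAB : (S - (S - Bᴴ * A⁻¹ * B)).PosSemidef := by
    rw [sub_sub_cancel]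
    simpa using (hA.inv.posSemidef).conjTranspose_mul_mul_same B
  have hblock : (fromBlocks (S - Bᴴ * A⁻¹ * B)⁻¹ (1 : Matrix (Fin k) (Fin k) ℂ)
      (1 : Matrix (Fin k) (Fin k) ℂ)ᴴ S).PosSemidef := by
    rw [Matrix.PosDef.fromBlocks₁₁ _ _ hL.inv]
    simpa [Matrix.nonsing_inv_nonsing_inv _ ((Matrix.isUnit_iff_isUnit_det _).mp hL.isUnit)] using hBAB
  have hdiff : ((S - Bᴴ * A⁻¹ * B)⁻¹ - S⁻¹).PosSemidef := by
    have := (Matrix.PosDef.fromBlocks₂₂ (S - Bᴴ * A⁻¹ * B)⁻¹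
      (1 : Matrix (Fin k) (Fin k) ℂ) hS).mp hblock
    simpa using this
  -- assemble
  refine ⟨isUnit_iff_isUnit_det S |>.mp hS.isUnit,
          isUnit_iff_isUnit_det N |>.mp hpd.isUnit, fun i => ?_⟩
  have h1 : 0 < S⁻¹ i i := pd_diag hS.inv i
  have h2 : 0 < N⁻¹ (Sum.inr i) (Sum.inr i) := pd_diag hpd.inv (Sum.inr i)
  have h3 : S⁻¹ i i ≤ N⁻¹ (Sum.inr i) (Sum.inr i) := by
    rw [hMdiag i]
    have h4 := Complex.le_def.mp (psd_diag hdiff i)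
    simp only [Matrix.sub_apply, Complex.sub_re, Complex.sub_im, Complex.zero_re,
      Complex.zero_im] at h4
    rw [Complex.le_def]
    exact ⟨by linarith [h4.1], by linarith [h4.2]⟩
  rw [Complex.lt_def] at h1 h2
  rw [Complex.le_def] at h3
  exact ⟨⟨h1.2.symm ▸ rfl, h1.1⟩, ⟨h2.2.symm ▸ rfl, h2.1⟩, h3.1⟩
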